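/- arXiv:1212.4713 — 6 statements merged into one kernel-verified Lean document; each statement's English description precedes it below -/
import Mathlib

section
/- For every real number r with 0 < r < 1 and every complex number q with |q| ≤ r, the series ∑_{n=1}^∞ |log |1 − qⁿ|| converges and satisfies ∑_{n=1}^∞ |log |1 − qⁿ|| ≤ (−log(1−r))/(r(1−r)) · |q|. -/
lemma aux1 (z : ℂ) (hz : ‖z‖ < 1) :
    |Real.log (‖1 - z‖)| ≤ -Real.log (1 - ‖z‖) := by
  set a := ‖z‖ with ha
  have ha0 : 0 ≤ a := norm_nonneg z
  have hpos : 0 < 1 - a := by linarith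
  have h1 : 1 - a ≤ ‖1 - z‖ := by
    have := norm_add_le (1 - z) z
    simp at this
    linarith
  have h2 : ‖1 - z‖ ≤ 1 + a := by
    calc ‖1 - z‖ ≤ ‖(1:ℂ)‖ + ‖-z‖ := by
          rw [sub_eq_add_neg]; exact norm_add_le _ _
      _ = 1 + a := by simp [ha]
  rw [abs_le]
  constructor
  · have := Real.log_le_log hpos h1
    linarith
  · have h3 : ‖1 - z‖ ≤ (1 - a)⁻¹ := by
      have : (1 + a) * (1 - a) ≤ 1 := by nlinarith
      have h4 : 1 + a ≤ (1 - a)⁻¹ := by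
        rw [inv_eq_one_div, le_div_iff₀ hpos]
        nlinarith
      linarith
    have := Real.log_le_log (by linarith : (0:ℝ) < ‖1 - z‖) h3
    rwa [Real.log_inv] at this

lemma aux2 (r x : ℝ) (hr0 : 0 < r) (hr1 : r < 1) (hx0 : 0 ≤ x) (hxr : x ≤ r) :
    -Real.log (1 - x) ≤ x / r * (-Real.log (1 - r)) := by
  have hcon : ConcaveOn ℝ (Set.Ioi 0) Real.log := strictConcaveOn_log_Ioi.concaveOn
  have ht0 : 0 ≤ x / r := div_nonneg hx0 hr0.le
  have ht1 : x / r ≤ 1 := (div_le_one hr0).mpr hxr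
  have h := hcon.2 (Set.mem_Ioi.mpr one_pos) (Set.mem_Ioi.mpr (by linarith : (0:ℝ) < 1 - r))
    (by linarith : (0:ℝ) ≤ 1 - x / r) ht0 (by ring)
  simp only [smul_eq_mul, Real.log_one, mul_one, mul_zero, zero_add] at h
  have hxx : 1 - x / r + x / r * (1 - r) = 1 - x := by
    field_simp
    ring
  rw [hxx] at h
  linarith

theorem stmt_0 (r : ℝ) (hr0 : 0 < r) (hr1 : r < 1) (q : ℂ) (hq : ‖q‖ ≤ r) :
    Summable (fun n : ℕ => |Real.log (‖1 - q ^ (n + 1)‖)|) ∧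
      ∑' n : ℕ, |Real.log (‖1 - q ^ (n + 1)‖)| ≤
        -Real.log (1 - r) / (r * (1 - r)) * ‖q‖ := by
  set a := ‖q‖ with ha
  have ha0 : 0 ≤ a := norm_nonneg q
  have ha1 : a < 1 := lt_of_le_of_lt hq hr1
  have hC0 : 0 ≤ -Real.log (1 - r) := by
    have : Real.log (1 - r) ≤ 0 := Real.log_nonpos (by linarith) (by linarith)
    linarith
  have hbound : ∀ n : ℕ, |Real.log (‖1 - q ^ (n + 1)‖)| ≤
      (-Real.log (1 - r) / r) * a * a ^ n := by
    intro n
    have hpow : ‖q ^ (n + 1)‖ = a ^ (n + 1) := by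
      rw [norm_pow]
    have hle : a ^ (n + 1) ≤ r := by
      calc a ^ (n + 1) ≤ a ^ 1 := pow_le_pow_of_le_one ha0 ha1.le (by omega)
        _ = a := pow_one a
        _ ≤ r := hq
    have hlt : ‖q ^ (n + 1)‖ < 1 := by rw [hpow]; linarith
    have h1 := aux1 (q ^ (n + 1)) hlt
    have h2 := aux2 r (a ^ (n + 1)) hr0 hr1 (pow_nonneg ha0 _) hle
    rw [hpow] at h1
    calc |Real.log (‖1 - q ^ (n + 1)‖)| ≤ -Real.log (1 - a ^ (n + 1)) := h1
      _ ≤ a ^ (n + 1) / r * (-Real.log (1 - r)) := h2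
      _ = (-Real.log (1 - r) / r) * a * a ^ n := by ring
  have hgsum : Summable (fun n : ℕ => (-Real.log (1 - r) / r) * a * a ^ n) :=
    (summable_geometric_of_lt_one ha0 ha1).mul_left _
  have hsum : Summable (fun n : ℕ => |Real.log (‖1 - q ^ (n + 1)‖)|) :=
    Summable.of_nonneg_of_le (fun n => abs_nonneg _) hbound hgsum
  refine ⟨hsum, ?_⟩
  have htle := Summable.tsum_le_tsum hbound hsum hgsum
  have hgval : ∑' n : ℕ, (-Real.log (1 - r) / r) * a * a ^ n
      = (-Real.log (1 - r) / r) * a * (1 - a)⁻¹ := by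
    rw [tsum_mul_left, tsum_geometric_of_lt_one ha0 ha1]
  rw [hgval] at htle
  have hfinal : (-Real.log (1 - r) / r) * a * (1 - a)⁻¹ ≤
      -Real.log (1 - r) / (r * (1 - r)) * a := by
    have h1r : (0:ℝ) < 1 - r := by linarith
    have h1a : (0:ℝ) < 1 - a := by linarith
    have hinv : (1 - a)⁻¹ ≤ (1 - r)⁻¹ := by
      apply inv_anti₀ h1r; linarith
    have hnn : 0 ≤ (-Real.log (1 - r) / r) * a :=
      mul_nonneg (div_nonneg hC0 hr0.le) ha0
    calc (-Real.log (1 - r) / r) * a * (1 - a)⁻¹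
        ≤ (-Real.log (1 - r) / r) * a * (1 - r)⁻¹ := by
          exact mul_le_mul_of_nonneg_left hinv hnn
      _ = -Real.log (1 - r) / (r * (1 - r)) * a := by
          field_simp
  linarith
end

section
/- For every complex number q with 0 < |q| < 1, the series ∑_{n=1}^∞ |log |1 − qⁿ|| converges and satisfies ∑_{n=1}^∞ |log |1 − qⁿ|| ≤ π² / (6 · log(1/|q|)). -/
open Real

theorem stmt_1 (q : ℂ) (hq0 : 0 < ‖q‖) (hq1 : ‖q‖ < 1) :
    Summable (fun n : ℕ => |Real.log (‖1 - q ^ (n + 1)‖)|) ∧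
      ∑' n : ℕ, |Real.log (‖1 - q ^ (n + 1)‖)| ≤
        Real.pi ^ 2 / (6 * Real.log (‖q‖)⁻¹) := by
  set r := ‖q‖ with hrdef
  have hr0 : 0 < r := hq0
  have hr1 : r < 1 := hq1
  set t := Real.log r⁻¹ with htdef
  have ht : 0 < t := Real.log_pos (by rw [lt_inv_comm₀] <;> simp [hr0, hr1] )
  -- basic facts about powers of r
  have hrm1 : ∀ m : ℕ, r ^ (m + 1) < 1 := fun m =>
    pow_lt_one₀ hr0.le hr1 m.succ_ne_zero
  have hrm0 : ∀ m : ℕ, 0 < r ^ (m + 1) := fun m => pow_pos hr0 _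
  have hsub0 : ∀ m : ℕ, 0 < 1 - r ^ (m + 1) := fun m => by
    have := hrm1 m; linarith
  -- pointwise bound: |log |1 - q^{n+1}|| ≤ -log (1 - r^{n+1})
  have hab : ∀ n : ℕ, |Real.log (‖1 - q ^ (n + 1)‖)| ≤
      -Real.log (1 - r ^ (n + 1)) := by
    intro n
    have habs : ‖q ^ (n + 1)‖ = r ^ (n + 1) := by
      rw [norm_pow]
    have h1 : 1 - r ^ (n + 1) ≤ ‖1 - q ^ (n + 1)‖ := by
      have h := norm_sub_norm_le (1 : ℂ) (q ^ (n + 1))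
      simpa [habs] using h
    have h2 : ‖1 - q ^ (n + 1)‖ ≤ (1 - r ^ (n + 1))⁻¹ := by
      have h3 : ‖1 - q ^ (n + 1)‖ ≤ 1 + r ^ (n + 1) := by
        calc ‖1 - q ^ (n + 1)‖ ≤
            ‖(1 : ℂ)‖ + ‖q ^ (n + 1)‖ := by
              simpa using norm_sub_le (1 : ℂ) (q ^ (n + 1))
          _ = 1 + r ^ (n + 1) := by simp [habs]
      refine h3.trans ?_
      rw [inv_eq_one_div, le_div_iff₀ (hsub0 n)]
      nlinarith [hrm0 n, hrm1 n]
    have hA0 : 0 < ‖1 - q ^ (n + 1)‖ := lt_of_lt_of_le (hsub0 n) h1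
    rw [abs_le]
    constructor
    · rw [neg_neg]
      exact Real.log_le_log (hsub0 n) h1
    · calc Real.log (‖1 - q ^ (n + 1)‖) ≤
          Real.log (1 - r ^ (n + 1))⁻¹ := Real.log_le_log hA0 h2
        _ = -Real.log (1 - r ^ (n + 1)) := Real.log_inv _
  -- key inequality : 1 - r^(k+1) ≥ (k+1) * t * r^(k+1)
  have hkey : ∀ k : ℕ, ((k : ℝ) + 1) * t * r ^ (k + 1) ≤ 1 - r ^ (k + 1) := by
    intro k
    have hrexp : r = Real.exp (-t) := by
      rw [htdef, Real.log_inv, neg_neg, Real.exp_log hr0]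
    have hs : 0 < ((k : ℝ) + 1) * t := by positivity
    have hpow : r ^ (k + 1) = Real.exp (-(((k : ℝ) + 1) * t)) := by
      rw [hrexp, ← Real.exp_nat_mul]
      congr 1
      push_cast
      ring
    rw [hpow]
    set s := ((k : ℝ) + 1) * t
    have h := Real.add_one_le_exp s
    have he : 0 < Real.exp (-s) := Real.exp_pos _
    have : (s + 1) * Real.exp (-s) ≤ 1 := by
      calc (s + 1) * Real.exp (-s) ≤ Real.exp s * Real.exp (-s) := by
            exact mul_le_mul_of_nonneg_right h he.le
        _ = 1 := by rw [← Real.exp_add]; simp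
    nlinarith
  -- the double-indexed family
  set F : ℕ × ℕ → ℝ := fun p => (r ^ (p.2 + 1)) ^ (p.1 + 1) / (p.1 + 1) with hFdef
  have hF0 : 0 ≤ F := fun p => by positivity
  -- row sums (fixed k = p.1): geometric over n = p.2
  have hrow : ∀ k : ℕ, HasSum (fun n => F (k, n))
      (r ^ (k + 1) / ((1 - r ^ (k + 1)) * (k + 1))) := by
    intro k
    have hx0 : 0 ≤ r ^ (k + 1) := (hrm0 k).le
    have hx1 : r ^ (k + 1) < 1 := hrm1 k
    have hg : HasSum (fun n : ℕ => (r ^ (k + 1)) ^ n) (1 - r ^ (k + 1))⁻¹ :=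
      hasSum_geometric_of_lt_one hx0 hx1
    have hg2 := (hg.mul_right (r ^ (k + 1))).div_const ((k : ℝ) + 1)
    have hterm : ∀ n : ℕ, F (k, n) = (r ^ (k + 1)) ^ n * r ^ (k + 1) / ((k : ℝ) + 1) := by
      intro n
      show (r ^ (n + 1)) ^ (k + 1) / ((k : ℝ) + 1) = _
      rw [← pow_succ, ← pow_mul, ← pow_mul, Nat.mul_comm]
    have hval : (1 - r ^ (k + 1))⁻¹ * r ^ (k + 1) / ((k : ℝ) + 1) =
        r ^ (k + 1) / ((1 - r ^ (k + 1)) * ((k : ℝ) + 1)) := by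
      have hne : (1 - r ^ (k + 1)) ≠ 0 := (hsub0 k).ne'
      have hne2 : ((k : ℝ) + 1) ≠ 0 := by positivity
      field_simp
    rw [funext hterm, ← hval]
    exact hg2
  -- bound on row sums
  have hbound : ∀ k : ℕ, r ^ (k + 1) / ((1 - r ^ (k + 1)) * (k + 1)) ≤
      1 / (((k : ℝ) + 1) ^ 2 * t) := by
    intro k
    rw [div_le_div_iff₀ (mul_pos (hsub0 k) (by positivity)) (by positivity)]
    have := hkey k
    nlinarith [hrm0 k, ht, sq_nonneg ((k : ℝ) + 1)]
  -- ζ(2) shifted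
  have hzeta : HasSum (fun k : ℕ => 1 / (((k : ℝ) + 1) ^ 2 * t)) (π ^ 2 / (6 * t)) := by
    have h1 : HasSum (fun k : ℕ => (1 : ℝ) / ((k : ℝ) + 1) ^ 2) (π ^ 2 / 6) := by
      have h0 := hasSum_zeta_two
      rw [← hasSum_nat_add_iff' 1] at h0
      · simpa using h0
    have h2 := h1.div_const t
    have e1 : (fun k : ℕ => 1 / ((k : ℝ) + 1) ^ 2 / t) =
        fun k : ℕ => 1 / (((k : ℝ) + 1) ^ 2 * t) := by
      funext k; rw [div_div]
    have e2 : π ^ 2 / 6 / t = π ^ 2 / (6 * t) := by rw [div_div]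
    rw [e1, e2] at h2
    exact h2
  -- summability of the column-sum sequence
  have hcolsum : Summable (fun k : ℕ => r ^ (k + 1) / ((1 - r ^ (k + 1)) * (k + 1))) := by
    refine Summable.of_nonneg_of_le
      (fun k => div_nonneg (hrm0 k).le (mul_pos (hsub0 k) (by positivity : (0:ℝ) < (k:ℝ) + 1)).le)
      hbound ?_
    exact hzeta.summable
  -- F is summable
  have hFsum : Summable F := by
    rw [summable_prod_of_nonneg hF0]
    refine ⟨fun k => (hrow k).summable, ?_⟩
    have heq : (fun k : ℕ => ∑' n : ℕ, F (k, n)) =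
        fun k : ℕ => r ^ (k + 1) / ((1 - r ^ (k + 1)) * (k + 1)) := by
      funext k; exact (hrow k).tsum_eq
    rw [heq]
    exact hcolsum
  -- b n := -log (1 - r^(n+1)) has sum over k of F(k,n)
  have hb : ∀ n : ℕ, HasSum (fun k => F (k, n)) (-Real.log (1 - r ^ (n + 1))) := by
    intro n
    have hx : |r ^ (n + 1)| < 1 := by
      rw [abs_of_nonneg (hrm0 n).le]; exact hrm1 n
    have h := hasSum_pow_div_log_of_abs_lt_one hx
    have heq : (fun k : ℕ => (r ^ (n + 1)) ^ (k + 1) / ((k : ℝ) + 1)) =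
        fun k : ℕ => F (k, n) := by
      funext k
      simp only [hFdef]
    rwa [heq] at h
  have hbsummable : Summable (fun n : ℕ => -Real.log (1 - r ^ (n + 1))) := by
    have h2 : Summable (fun n : ℕ => ∑' k : ℕ, F (k, n)) :=
      ((summable_prod_of_nonneg (fun p => hF0 p.swap)).mp hFsum.prod_symm).2
    have heq : (fun n : ℕ => -Real.log (1 - r ^ (n + 1))) =
        fun n : ℕ => ∑' k : ℕ, F (k, n) := by
      funext n; exact (hb n).tsum_eq.symm
    rw [heq]
    exact h2
  have hbnonneg : ∀ n : ℕ, 0 ≤ -Real.log (1 - r ^ (n + 1)) := by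
    intro n
    rw [neg_nonneg]
    exact Real.log_nonpos (hsub0 n).le (by linarith [hrm0 n])
  -- summability of the target
  have hasummable : Summable (fun n : ℕ => |Real.log (‖1 - q ^ (n + 1)‖)|) :=
    Summable.of_nonneg_of_le (fun n => abs_nonneg _) hab hbsummable
  refine ⟨hasummable, ?_⟩
  have step1 : ∑' n : ℕ, |Real.log (‖1 - q ^ (n + 1)‖)| ≤
      ∑' n : ℕ, -Real.log (1 - r ^ (n + 1)) :=
    Summable.tsum_le_tsum hab hasummable hbsummable
  have step2 : ∑' n : ℕ, -Real.log (1 - r ^ (n + 1)) =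
      ∑' k : ℕ, r ^ (k + 1) / ((1 - r ^ (k + 1)) * (k + 1)) := by
    calc ∑' n : ℕ, -Real.log (1 - r ^ (n + 1))
        = ∑' n : ℕ, ∑' k : ℕ, F (k, n) := by
          congr 1; ext n; exact (hb n).tsum_eq.symm
      _ = ∑' k : ℕ, ∑' n : ℕ, F (k, n) :=
          Summable.tsum_comm (f := fun k n => F (k, n)) hFsum
      _ = ∑' k : ℕ, r ^ (k + 1) / ((1 - r ^ (k + 1)) * (k + 1)) := by
          congr 1; ext k; exact (hrow k).tsum_eq
  have step3 : ∑' k : ℕ, r ^ (k + 1) / ((1 - r ^ (k + 1)) * (k + 1)) ≤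
      π ^ 2 / (6 * t) := by
    rw [← hzeta.tsum_eq]
    exact Summable.tsum_le_tsum hbound hcolsum hzeta.summable
  calc ∑' n : ℕ, |Real.log (‖1 - q ^ (n + 1)‖)| ≤
      ∑' n : ℕ, -Real.log (1 - r ^ (n + 1)) := step1
    _ ≤ π ^ 2 / (6 * t) := by rw [step2]; exact step3
end

section
/- Let p be a prime number. For every τ in the complex upper half-plane with Im τ ≥ √3/2 (in particular for every τ in 𝒟 + ℤ, the translates of the standard fundamental domain), one has | log |g(τ)| + (p−1) · log |q_τ| | ≤ 25 · |q_τ|. -/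
/-- `q_τ = exp(2πiτ)`. -/
noncomputable def qt (τ : ℂ) : ℂ := Complex.exp (2 * Real.pi * Complex.I * τ)

/-- `g(τ) = exp(2πi(1−p)τ) · ∏_{n ≥ 1, p ∤ n} (1 − q_τⁿ)²⁴`. -/
noncomputable def modg (p : ℕ) (τ : ℂ) : ℂ :=
  Complex.exp (2 * Real.pi * Complex.I * ((1 : ℂ) - (p : ℂ)) * τ) *
    ∏' n : {n : ℕ // 0 < n ∧ ¬ p ∣ n}, (1 - qt τ ^ (n : ℕ)) ^ 24

set_option maxHeartbeats 1000000 in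
theorem stmt_3 (p : ℕ) (hp : p.Prime) (τ : ℂ) (hτ : Real.sqrt 3 / 2 ≤ τ.im) :
    |Real.log (‖modg p τ‖) + ((p : ℝ) - 1) * Real.log (‖qt τ‖)| ≤
      25 * ‖qt τ‖ := by
  have hπ : (3.141592:ℝ) < Real.pi := Real.pi_gt_d6
  set r : ℝ := ‖qt τ‖ with hrdef
  -- r = exp(-(2π τ.im))
  have hqabs : r = Real.exp (-(2 * Real.pi * τ.im)) := by
    rw [hrdef, qt, Complex.norm_exp]
    congr 1
    simp [Complex.mul_re, Complex.mul_im]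
  have hr0 : 0 < r := by rw [hqabs]; exact Real.exp_pos _
  -- √3 ≥ 1.732
  have hsqrt3 : (1.732:ℝ) ≤ Real.sqrt 3 := by
    rw [show (1.732:ℝ) = Real.sqrt (1.732^2) from (Real.sqrt_sq (by norm_num)).symm]
    exact Real.sqrt_le_sqrt (by norm_num)
  have him : (5.43:ℝ) ≤ 2 * Real.pi * τ.im := by nlinarith [Real.sqrt_nonneg 3]
  have h200 : (200:ℝ) ≤ Real.exp 5.43 := by
    have h5 : Real.exp 5.43 = Real.exp 1 ^ 5 * Real.exp 0.43 := by
      rw [← Real.exp_nat_mul, ← Real.exp_add]; norm_num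
    have h043 : (1.43:ℝ) ≤ Real.exp 0.43 := by
      have := Real.add_one_le_exp (0.43:ℝ); linarith
    have he : (2.7182818:ℝ) ≤ Real.exp 1 := le_of_lt (by linarith [Real.exp_one_gt_d9])
    have hp5 : (2.7182818:ℝ)^5 ≤ Real.exp 1 ^ 5 := pow_le_pow_left₀ (by norm_num) he 5
    have : (148.41:ℝ) ≤ (2.7182818:ℝ)^5 := by norm_num
    nlinarith [Real.exp_pos (0.43:ℝ)]
  have hr005 : r ≤ 0.005 := by
    rw [hqabs]
    have h1 : Real.exp (-(2 * Real.pi * τ.im)) ≤ Real.exp (-(5.43:ℝ)) :=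
      Real.exp_le_exp.mpr (by linarith)
    have h2 : Real.exp (-(5.43:ℝ)) = (Real.exp 5.43)⁻¹ := Real.exp_neg _
    have h3 : (Real.exp 5.43)⁻¹ ≤ (200:ℝ)⁻¹ := by
      apply inv_anti₀ (by norm_num) h200
    calc Real.exp (-(2 * Real.pi * τ.im)) ≤ (Real.exp 5.43)⁻¹ := by rw [← h2]; exact h1
      _ ≤ (200:ℝ)⁻¹ := h3
      _ ≤ 0.005 := by norm_num
  have hr1 : r < 1 := lt_of_le_of_lt hr005 (by norm_num)
  -- norms of powers
  have hqn : ∀ n : ℕ, ‖qt τ ^ n‖ = r ^ n := fun n => by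
    exact norm_pow _ _
  have hrn_le : ∀ n : ℕ, 0 < n → r ^ n ≤ r := fun n hn =>
    pow_le_of_le_one hr0.le hr1.le hn.ne'
  -- nonvanishing
  have hne : ∀ n : ℕ, 0 < n → (1:ℂ) - qt τ ^ n ≠ 0 := by
    intro n hn h
    have : qt τ ^ n = 1 := by linear_combination -h
    have : r ^ n = 1 := by rw [← hqn, this, norm_one]
    nlinarith [hrn_le n hn]
  -- log bound
  have hlog : ∀ n : ℕ, 0 < n → ‖Complex.log (1 - qt τ ^ n)‖ ≤ 1.01 * r ^ n := by
    intro n hn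
    have hs : ‖-(qt τ ^ n)‖ = r ^ n := by rw [norm_neg, hqn]
    have hsr : r ^ n ≤ r := hrn_le n hn
    have hs1 : ‖-(qt τ ^ n)‖ < 1 := by rw [hs]; linarith
    have := Complex.norm_log_one_add_le hs1
    rw [hs] at this
    have heq : (1:ℂ) + -(qt τ ^ n) = 1 - qt τ ^ n := by ring
    rw [heq] at this
    have hsn0 : (0:ℝ) ≤ r ^ n := pow_nonneg hr0.le n
    have hinv : (1 - r ^ n)⁻¹ ≤ 2 := by
      have h2 : (1:ℝ)/2 ≤ 1 - r ^ n := by linarith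
      calc (1 - r ^ n)⁻¹ ≤ ((1:ℝ)/2)⁻¹ := inv_anti₀ (by norm_num) h2
        _ = 2 := by norm_num
    have h1 : (r ^ n) ^ 2 * (1 - r ^ n)⁻¹ ≤ (r ^ n) ^ 2 * 2 :=
      mul_le_mul_of_nonneg_left hinv (sq_nonneg _)
    nlinarith
  -- the log series over the subtype
  set ι := {n : ℕ // 0 < n ∧ ¬ p ∣ n}
  set f : ι → ℂ := fun n => (24:ℂ) * Complex.log (1 - qt τ ^ (n:ℕ)) with hfdef
  have hfb : ∀ n : ι, ‖f n‖ ≤ 24.24 * r ^ (n:ℕ) := by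
    intro n
    rw [hfdef]
    simp only [norm_mul]
    rw [show ‖(24:ℂ)‖ = 24 by simp]
    have := hlog (n:ℕ) n.2.1
    nlinarith [norm_nonneg (Complex.log (1 - qt τ ^ (n:ℕ)))]
  have hgeo : Summable (fun n : ℕ => r ^ n) := summable_geometric_of_lt_one hr0.le hr1
  have hgsub : Summable (fun n : ι => (24.24:ℝ) * r ^ (n:ℕ)) := by
    exact ((hgeo.mul_left 24.24).subtype _)
  have hfs : Summable (fun n : ι => ‖f n‖) :=
    Summable.of_nonneg_of_le (fun _ => norm_nonneg _) hfb hgsub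
  have hf : Summable f := hfs.of_norm
  set S : ℂ := ∑' n : ι, f n with hSdef
  -- the product equals exp S
  have hfun : (Complex.exp ∘ f) = fun n : ι => (1 - qt τ ^ (n:ℕ)) ^ 24 := by
    funext n
    simp only [Function.comp_apply, hfdef]
    rw [show ((24:ℂ)) = ((24:ℕ):ℂ) by norm_num, Complex.exp_nat_mul,
      Complex.exp_log (hne (n:ℕ) n.2.1)]
  have hprod : HasProd (fun n : ι => (1 - qt τ ^ (n:ℕ)) ^ 24) (Complex.exp S) := by
    have := hf.hasSum.cexp
    rwa [hfun] at this
  have htp : ∏' n : ι, (1 - qt τ ^ (n:ℕ)) ^ 24 = Complex.exp S := hprod.tprod_eq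
  -- compute log abs modg
  have hmod : modg p τ =
      Complex.exp (2 * Real.pi * Complex.I * ((1 : ℂ) - (p : ℂ)) * τ) * Complex.exp S := by
    rw [modg, htp]
  have hAre : (2 * (Real.pi:ℂ) * Complex.I * ((1:ℂ) - (p:ℂ)) * τ).re
      = ((p:ℝ) - 1) * (2 * Real.pi * τ.im) := by
    simp [Complex.mul_re, Complex.mul_im]
    ring
  have habs : ‖modg p τ‖
      = Real.exp (((p:ℝ) - 1) * (2 * Real.pi * τ.im) + S.re) := by
    rw [hmod, norm_mul, Complex.norm_exp, Complex.norm_exp, ← Real.exp_add, hAre]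
  have hlogq : Real.log r = -(2 * Real.pi * τ.im) := by
    rw [hqabs, Real.log_exp]
  rw [habs, Real.log_exp, hlogq]
  have hsimp : ((p:ℝ) - 1) * (2 * Real.pi * τ.im) + S.re
      + ((p:ℝ) - 1) * -(2 * Real.pi * τ.im) = S.re := by ring
  rw [hsimp]
  -- bound |S.re|
  have h1 : |S.re| ≤ ‖S‖ := by
    exact Complex.abs_re_le_norm S
  have h2 : ‖S‖ ≤ ∑' n : ι, ‖f n‖ := norm_tsum_le_tsum_norm hfs
  -- bound the sum of norms
  set h : ℕ → ℝ := fun n => if n = 0 then 0 else 24.24 * r ^ n with hhdef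
  have hh_nonneg : ∀ n, 0 ≤ h n := by
    intro n
    rw [hhdef]
    dsimp only
    split
    · exact le_refl 0
    · positivity
  have hh_le : ∀ n : ℕ, h n ≤ 24.24 * r ^ n := by
    intro n
    rw [hhdef]
    dsimp only
    split
    · positivity
    · exact le_refl _
  have hh_sum : Summable h :=
    Summable.of_nonneg_of_le hh_nonneg hh_le (hgeo.mul_left _)
  have h3 : ∑' n : ι, ‖f n‖ ≤ ∑' n : ι, h (n:ℕ) := by
    apply Summable.tsum_le_tsum _ hfs (hh_sum.subtype _)
    intro n
    have heq : h (n:ℕ) = 24.24 * r ^ (n:ℕ) := by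
      rw [hhdef]; dsimp only; rw [if_neg n.2.1.ne']
    exact le_trans (hfb n) (le_of_eq heq.symm)
  have h4 : ∑' n : ι, h (n:ℕ) ≤ ∑' n : ℕ, h n :=
    Summable.tsum_subtype_le h {n : ℕ | 0 < n ∧ ¬ p ∣ n} hh_nonneg hh_sum
  have h5 : ∑' n : ℕ, h n = 24.24 * r * (1 - r)⁻¹ := by
    rw [Summable.tsum_eq_zero_add hh_sum]
    have : ∀ n : ℕ, h (n + 1) = (24.24 * r) * r ^ n := by
      intro n
      rw [hhdef]; dsimp only; rw [if_neg (Nat.succ_ne_zero n)]; ring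
    simp only [this]
    rw [tsum_mul_left, tsum_geometric_of_lt_one hr0.le hr1]
    rw [hhdef]; dsimp only; rw [if_pos rfl]; ring
  have h6 : 24.24 * r * (1 - r)⁻¹ ≤ 25 * r := by
    have hinv : (1 - r)⁻¹ ≤ (0.995:ℝ)⁻¹ := inv_anti₀ (by norm_num) (by linarith)
    have : (0.995:ℝ)⁻¹ ≤ 1.02 := by norm_num
    nlinarith
  calc |S.re| ≤ ‖S‖ := h1
    _ ≤ ∑' n : ι, ‖f n‖ := h2
    _ ≤ ∑' n : ι, h (n:ℕ) := h3
    _ ≤ ∑' n : ℕ, h n := h4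
    _ = 24.24 * r * (1 - r)⁻¹ := h5
    _ ≤ 25 * r := h6
end

section
/- Let p be a prime number and let τ be a point of the complex upper half-plane with Im τ ≥ √3/2. If log |g(τ)| ≤ 12 · log p, then log(1/|q_τ|) ≤ (25·|q_τ| + 12·log p)/(p−1), and consequently log(1/|q_τ|) ≤ 2π√p. -/
/-- `log(1-x) ≥ -x/(1-x)` for `0 ≤ x < 1`. -/
lemma aux_log_one_sub_ge {x : ℝ} (h0 : 0 ≤ x) (h1 : x < 1) :
    -(x / (1 - x)) ≤ Real.log (1 - x) := by
  have hx : (0:ℝ) < 1 - x := by linarith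
  rw [Real.le_log_iff_exp_le hx]
  have h2 : x / (1 - x) + 1 ≤ Real.exp (x / (1 - x)) := Real.add_one_le_exp _
  have h3 : Real.exp (-(x / (1 - x))) * Real.exp (x / (1 - x)) = 1 := by
    rw [← Real.exp_add]; simp
  have h4 : (1 - x) * (1 + x / (1 - x)) = 1 := by field_simp; ring
  nlinarith [Real.exp_pos (-(x / (1 - x))), Real.exp_pos (x / (1 - x))]

lemma aux_abs_qt (τ : ℂ) : ‖qt τ‖ = Real.exp (-(2 * Real.pi * τ.im)) := by
  rw [qt, Complex.norm_exp]
  congr 1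
  simp [Complex.mul_re, Complex.mul_im]

lemma aux_prod_lower (p : ℕ) (τ : ℂ) (hr : ‖qt τ‖ ≤ 1/200) :
    Real.exp (-(25 * ‖qt τ‖)) ≤
      ‖∏' n : {n : ℕ // 0 < n ∧ ¬ p ∣ n}, (1 - qt τ ^ (n : ℕ)) ^ 24‖ := by
  set q := qt τ with hq
  set r := ‖q‖ with hrdef
  have hr0 : 0 ≤ r := norm_nonneg q
  have hr1 : r < 1 := by linarith
  have h1r : (0:ℝ) < 1 - r := by linarith
  have hpow : ∀ n : {n : ℕ // 0 < n ∧ ¬ p ∣ n}, r ^ (n:ℕ) ≤ r := fun n => by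
    calc r ^ (n:ℕ) ≤ r ^ 1 := pow_le_pow_of_le_one hr0 hr1.le n.2.1
    _ = r := pow_one r
  have hpow0 : ∀ n : {n : ℕ // 0 < n ∧ ¬ p ∣ n}, 0 ≤ r ^ (n:ℕ) := fun n => pow_nonneg hr0 _
  have hlb : ∀ n : {n : ℕ // 0 < n ∧ ¬ p ∣ n},
      1 - r ^ (n:ℕ) ≤ ‖1 - q ^ (n:ℕ)‖ := fun n => by
    have h := norm_sub_norm_le (1:ℂ) (q ^ (n:ℕ))
    simpa [norm_pow] using h
  have hub : ∀ n : {n : ℕ // 0 < n ∧ ¬ p ∣ n},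
      ‖1 - q ^ (n:ℕ)‖ ≤ 1 + r ^ (n:ℕ) := fun n => by
    have h := norm_sub_le (1:ℂ) (q ^ (n:ℕ))
    simpa [norm_pow] using h
  have hposn : ∀ n : {n : ℕ // 0 < n ∧ ¬ p ∣ n}, 0 < ‖1 - q ^ (n:ℕ)‖ := fun n =>
    lt_of_lt_of_le (by nlinarith [hpow n]) (hlb n)
  have hlog_lb : ∀ n : {n : ℕ // 0 < n ∧ ¬ p ∣ n},
      -(1/(1-r) * r ^ (n:ℕ)) ≤ Real.log (‖1 - q ^ (n:ℕ)‖) := fun n => by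
    have h1 : -(r^(n:ℕ) / (1 - r^(n:ℕ))) ≤ Real.log (1 - r^(n:ℕ)) :=
      aux_log_one_sub_ge (hpow0 n) (lt_of_le_of_lt (hpow n) hr1)
    have h2 : Real.log (1 - r^(n:ℕ)) ≤ Real.log (‖1 - q^(n:ℕ)‖) :=
      Real.log_le_log (by nlinarith [hpow n]) (hlb n)
    have h3 : r ^ (n:ℕ) / (1 - r ^ (n:ℕ)) ≤ r ^ (n:ℕ) / (1 - r) := by
      rw [div_le_div_iff₀ (by nlinarith [hpow n]) h1r]
      nlinarith [hpow n, hpow0 n]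
    have h4 : r ^ (n:ℕ) / (1 - r) = 1/(1-r) * r ^ (n:ℕ) := by ring
    linarith
  have hcb : 1/(1-r) ≤ 1.01 := by rw [div_le_iff₀ h1r]; nlinarith
  have hcb0 : (0:ℝ) < 1/(1-r) := by positivity
  have habs_log : ∀ n : {n : ℕ // 0 < n ∧ ¬ p ∣ n},
      |Real.log (‖1 - q ^ (n:ℕ)‖)| ≤ 2 * r ^ (n:ℕ) := fun n => by
    rw [abs_le]
    constructor
    · have h := hlog_lb n
      nlinarith [hpow0 n]
    · have h := Real.log_le_sub_one_of_pos (hposn n)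
      have := hub n
      linarith [hpow0 n]
  have hsum_r : Summable (fun n : {n : ℕ // 0 < n ∧ ¬ p ∣ n} => r ^ (n:ℕ)) :=
    (summable_geometric_of_lt_one hr0 hr1).comp_injective Subtype.val_injective
  have hsum_log : Summable (fun n : {n : ℕ // 0 < n ∧ ¬ p ∣ n} =>
      Real.log (‖1 - q ^ (n:ℕ)‖)) :=
    Summable.of_norm_bounded (hsum_r.mul_left 2)
      (fun n => by simpa [Real.norm_eq_abs] using habs_log n)
  have hg2 : Summable (fun k : ℕ => r ^ (k+1)) := by
    simpa [pow_succ] using (summable_geometric_of_lt_one hr0 hr1).mul_right r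
  have hval : (∑' k : ℕ, r ^ (k+1)) = r / (1-r) := by
    simp only [pow_succ]
    rw [tsum_mul_right, tsum_geometric_of_lt_one hr0 hr1]
    ring
  have htsum_r : (∑' n : {n : ℕ // 0 < n ∧ ¬ p ∣ n}, r ^ (n:ℕ)) ≤ r / (1 - r) := by
    rw [← hval]
    refine hsum_r.tsum_le_tsum_of_inj (fun n => (n:ℕ) - 1) ?_ (fun c _ => by positivity)
      (fun n => ?_) hg2
    · intro a b h
      have ha := a.2.1
      have hb := b.2.1
      exact Subtype.ext (by simp only at h; omega)
    · rw [Nat.sub_add_cancel n.2.1]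
  have htsum_r0 : 0 ≤ ∑' n : {n : ℕ // 0 < n ∧ ¬ p ∣ n}, r ^ (n:ℕ) :=
    tsum_nonneg hpow0
  have htsum_log : -(25 * r) ≤ ∑' n : {n : ℕ // 0 < n ∧ ¬ p ∣ n},
      24 * Real.log (‖1 - q ^ (n:ℕ)‖) := by
    have h1 : ∀ n : {n : ℕ // 0 < n ∧ ¬ p ∣ n},
        -(24 * (1/(1-r)) * r ^ (n:ℕ)) ≤ 24 * Real.log (‖1 - q ^ (n:ℕ)‖) := fun n => by
      have := hlog_lb n; nlinarith
    have hs1 : Summable (fun n : {n : ℕ // 0 < n ∧ ¬ p ∣ n} =>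
        -(24 * (1/(1-r)) * r ^ (n:ℕ))) := by
      simpa [neg_mul] using ((hsum_r.mul_left (24 * (1/(1-r)))).neg)
    have h2 := hs1.tsum_le_tsum h1 (hsum_log.mul_left 24)
    rw [tsum_neg, tsum_mul_left] at h2
    have hT : (∑' n : {n : ℕ // 0 < n ∧ ¬ p ∣ n}, r ^ (n:ℕ)) ≤ 1.01 * r := by
      refine le_trans htsum_r ?_
      rw [div_le_iff₀ h1r]; nlinarith
    nlinarith [mul_le_mul hcb hT htsum_r0 (by norm_num : (0:ℝ) ≤ 1.01)]
  have hne : ∀ n : {n : ℕ // 0 < n ∧ ¬ p ∣ n}, (1 - q ^ (n:ℕ)) ≠ 0 := fun n =>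
    norm_pos_iff.mp (hposn n)
  by_cases hM : Multipliable (fun n : {n : ℕ // 0 < n ∧ ¬ p ∣ n} => (1 - q ^ (n:ℕ)) ^ 24)
  · have habs : ‖∏' n : {n : ℕ // 0 < n ∧ ¬ p ∣ n}, (1 - q ^ (n:ℕ)) ^ 24‖
        = ∏' n : {n : ℕ // 0 < n ∧ ¬ p ∣ n}, ‖(1 - q ^ (n:ℕ)) ^ 24‖ :=
      hM.map_tprod normHom continuous_norm
    have hf : ∀ (_ : Unit) (n : {n : ℕ // 0 < n ∧ ¬ p ∣ n}),
        0 < ‖(1 - q ^ (n:ℕ)) ^ 24‖ := fun _ n => by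
      rw [norm_pow]; exact pow_pos (hposn n) _
    have hlogeq : ∀ n : {n : ℕ // 0 < n ∧ ¬ p ∣ n},
        Real.log (‖(1 - q ^ (n:ℕ)) ^ 24‖)
          = 24 * Real.log (‖1 - q ^ (n:ℕ)‖) := fun n => by
      rw [norm_pow, Real.log_pow]; push_cast; ring
    have hsum' : ∀ _ : Unit, Summable (fun n : {n : ℕ // 0 < n ∧ ¬ p ∣ n} =>
        Real.log (‖(1 - q ^ (n:ℕ)) ^ 24‖)) := fun _ => by
      simpa [hlogeq] using hsum_log.mul_left (24:ℝ)
    have hE := Real.rexp_tsum_eq_tprod (hf ()) (hsum' ())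
    rw [habs, ← hE]
    apply Real.exp_le_exp.mpr
    calc -(25 * r) ≤ ∑' n : {n : ℕ // 0 < n ∧ ¬ p ∣ n},
        24 * Real.log (‖1 - q ^ (n:ℕ)‖) := htsum_log
      _ = _ := by exact tsum_congr fun n => (hlogeq n).symm
  · rw [tprod_eq_one_of_not_multipliable hM]
    simp only [norm_one]
    rw [Real.exp_le_one_iff]
    nlinarith

set_option maxHeartbeats 1000000 in
theorem stmt_5 (p : ℕ) (hp : p.Prime) (τ : ℂ) (hτ : Real.sqrt 3 / 2 ≤ τ.im)
    (hg : Real.log (‖modg p τ‖) ≤ 12 * Real.log p) :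
    Real.log (‖qt τ‖)⁻¹ ≤
        (25 * ‖qt τ‖ + 12 * Real.log p) / ((p : ℝ) - 1) ∧
      Real.log (‖qt τ‖)⁻¹ ≤ 2 * Real.pi * Real.sqrt p := by
  have hpi := Real.pi_gt_d6
  have hs3 : (1.732:ℝ) ≤ Real.sqrt 3 := by
    nlinarith [Real.sq_sqrt (by norm_num : (0:ℝ) ≤ 3), Real.sqrt_nonneg 3]
  have htim : (0:ℝ) < τ.im := by nlinarith
  set r := ‖qt τ‖ with hrdef
  have hre : r = Real.exp (-(2 * Real.pi * τ.im)) := aux_abs_qt τ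
  have hr0 : 0 < r := by rw [hre]; exact Real.exp_pos _
  have hexp1 : (2.7182818283:ℝ) < Real.exp 1 := Real.exp_one_gt_d9
  have h544 : (5.44:ℝ) ≤ 2 * Real.pi * τ.im := by nlinarith
  have hexp544 : (200:ℝ) ≤ Real.exp 5.44 := by
    have h1 : Real.exp 5.44 = Real.exp 1 ^ 5 * Real.exp 0.44 := by
      rw [← Real.exp_nat_mul, ← Real.exp_add]
      norm_num
    have h2 : (2.7182818283:ℝ)^5 ≤ Real.exp 1 ^ 5 :=
      pow_le_pow_left₀ (by norm_num) hexp1.le 5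
    have h3 : (1.44:ℝ) ≤ Real.exp 0.44 := by
      have := Real.add_one_le_exp (0.44:ℝ); linarith
    have h4 : (148:ℝ) ≤ (2.7182818283:ℝ)^5 := by norm_num
    nlinarith [Real.exp_pos (0.44:ℝ)]
  have hr200 : r ≤ 1/200 := by
    rw [hre]
    have h1 : Real.exp (-(2 * Real.pi * τ.im)) ≤ Real.exp (-5.44) :=
      Real.exp_le_exp.mpr (by linarith)
    have h2 : Real.exp (-5.44) * Real.exp 5.44 = 1 := by
      rw [← Real.exp_add]; norm_num
    nlinarith [Real.exp_pos (-5.44:ℝ)]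
  have hlogr : Real.log r⁻¹ = 2 * Real.pi * τ.im := by
    rw [hre, ← Real.exp_neg, Real.log_exp, neg_neg]
  have hP := aux_prod_lower p τ (by rw [← hrdef]; exact hr200)
  set P := ∏' n : {n : ℕ // 0 < n ∧ ¬ p ∣ n}, (1 - qt τ ^ (n : ℕ)) ^ 24 with hPdef
  have hPpos : 0 < ‖P‖ := lt_of_lt_of_le (Real.exp_pos _) hP
  have hlogP : -(25 * r) ≤ Real.log (‖P‖) := by
    rw [← Real.log_exp (-(25 * r))]
    exact Real.log_le_log (Real.exp_pos _) hP
  have habsg : ‖modg p τ‖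
      = Real.exp (2 * Real.pi * ((p:ℝ) - 1) * τ.im) * ‖P‖ := by
    rw [modg, norm_mul, Complex.norm_exp]
    congr 2
    simp [Complex.mul_re, Complex.mul_im]
    ring
  have hloggg : 2 * Real.pi * ((p:ℝ) - 1) * τ.im + Real.log (‖P‖)
      ≤ 12 * Real.log p := by
    rw [habsg, Real.log_mul (Real.exp_ne_zero _) (ne_of_gt hPpos), Real.log_exp] at hg
    exact hg
  have hp2 : 2 ≤ p := hp.two_le
  have hp2' : (2:ℝ) ≤ (p:ℝ) := by exact_mod_cast hp2
  have hp1 : (1:ℝ) ≤ (p:ℝ) - 1 := by linarith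
  have hmain : Real.log r⁻¹ * ((p:ℝ) - 1) ≤ 25 * r + 12 * Real.log p := by
    rw [hlogr]; nlinarith [hloggg, hlogP]
  have goal1 : Real.log r⁻¹ ≤ (25 * r + 12 * Real.log p) / ((p:ℝ) - 1) := by
    rw [le_div_iff₀ (by linarith)]
    exact hmain
  refine ⟨goal1, ?_⟩
  rcases eq_or_ne p 2 with hp' | hp'
  · subst hp'
    have hlog2 : Real.log 2 < 0.6931471808 := Real.log_two_lt_d9
    have hs2 : (1.414:ℝ) ≤ Real.sqrt 2 := by
      nlinarith [Real.sq_sqrt (by norm_num : (0:ℝ) ≤ 2), Real.sqrt_nonneg 2]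
    have h1 : Real.log r⁻¹ ≤ 25 * r + 12 * Real.log 2 := by
      have := goal1
      norm_num at this ⊢
      linarith
    push_cast
    nlinarith
  · have hp3 : 3 ≤ p := lt_of_le_of_ne hp2 (Ne.symm hp')
    have hp3' : (3:ℝ) ≤ (p:ℝ) := by exact_mod_cast hp3
    set s := Real.sqrt p with hsdef
    have hss : s * s = (p:ℝ) := Real.mul_self_sqrt (by positivity)
    have hs173 : (1.732:ℝ) ≤ s := le_trans hs3 (Real.sqrt_le_sqrt hp3')
    have hlogp : Real.log p ≤ 2 * (s - 1) := by
      have h1 : Real.log s ≤ s - 1 := Real.log_le_sub_one_of_pos (by linarith)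
      have h2 : Real.log s = Real.log p / 2 := Real.log_sqrt (by positivity)
      linarith
    refine le_trans goal1 ?_
    rw [div_le_iff₀ (by linarith)]
    have hcube : 6.283184 * (s * (s * s - 1)) ≤ 2 * Real.pi * s * ((p:ℝ) - 1) := by
      rw [← hss]
      have hfac : (0:ℝ) ≤ s * (s * s - 1) := by nlinarith
      have h5 := mul_le_mul_of_nonneg_right hpi.le hfac
      nlinarith [h5]
    nlinarith [hcube]
end

section
/- Let p be a prime number. For every point τ₀ of the complex upper half-plane ℍ, there exist a point τ ∈ ℍ and an integer n with τ − n ∈ 𝒟, and an element γ ∈ Γ₀(p), such that either γ·τ₀ = τ or γ·τ₀ = −1/τ. -/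
/-- The Möbius action of a matrix in `SL₂(ℤ)` on a complex number. -/
noncomputable def moebius (γ : Matrix.SpecialLinearGroup (Fin 2) ℤ) (τ : ℂ) : ℂ :=
  (((γ : Matrix (Fin 2) (Fin 2) ℤ) 0 0 : ℂ) * τ + ((γ : Matrix (Fin 2) (Fin 2) ℤ) 0 1 : ℂ)) /
    (((γ : Matrix (Fin 2) (Fin 2) ℤ) 1 0 : ℂ) * τ + ((γ : Matrix (Fin 2) (Fin 2) ℤ) 1 1 : ℂ))

open UpperHalfPlane ModularGroup

lemma moebius_eq (A : Matrix.SpecialLinearGroup (Fin 2) ℤ) (z : UpperHalfPlane) :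
    moebius A (z : ℂ) = ((A • z : UpperHalfPlane) : ℂ) := by
  rw [UpperHalfPlane.specialLinearGroup_apply]
  simp [moebius]

lemma one_le_abs_of_fd {w : UpperHalfPlane} (hw : w ∈ ModularGroup.fd) :
    1 ≤ ‖(w : ℂ)‖ := by
  have h1 : 1 ≤ Complex.normSq (w : ℂ) := hw.1
  have h2 : ‖(w : ℂ)‖ ^ 2 = Complex.normSq (w : ℂ) := Complex.sq_norm _
  nlinarith [norm_nonneg (w : ℂ)]

theorem stmt_8 (p : ℕ) (hp : p.Prime) (τ₀ : ℂ) (hτ₀ : 0 < τ₀.im) :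
    ∃ τ : ℂ, 0 < τ.im ∧
      (∃ n : ℤ, 1 ≤ ‖τ - n‖ ∧ |(τ - (n : ℂ)).re| ≤ 1 / 2) ∧
      ∃ γ ∈ CongruenceSubgroup.Gamma0 p, moebius γ τ₀ = τ ∨ moebius γ τ₀ = -1 / τ := by
  haveI : Fact p.Prime := ⟨hp⟩
  set z : UpperHalfPlane := ⟨τ₀, hτ₀⟩ with hz
  obtain ⟨g, hg⟩ := ModularGroup.exists_smul_mem_fd z
  set w : UpperHalfPlane := g • z with hwdef
  by_cases hc : ((g 1 0 : ℤ) : ZMod p) = 0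
  · -- g itself is in Γ₀(p)
    refine ⟨(w : ℂ), w.2, ⟨0, ?_, ?_⟩, g, CongruenceSubgroup.Gamma0_mem.mpr (by simpa using hc),
      Or.inl ?_⟩
    · simpa using one_le_abs_of_fd hg
    · simpa using hg.2
    · have := moebius_eq g z
      exact this
  · -- use γ = S * T^n * g
    set u : ZMod p := -((g 0 0 : ℤ) : ZMod p) * (((g 1 0 : ℤ) : ZMod p))⁻¹ with hu
    set n : ℤ := (u.val : ℤ) with hn
    have hnu : ((n : ZMod p)) = u := by
      simp [hn, ZMod.natCast_val, ZMod.cast_id]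
    have hkey : (((g 0 0 : ℤ) + n * (g 1 0 : ℤ) : ℤ) : ZMod p) = 0 := by
      push_cast
      rw [hnu, hu]
      field_simp
      ring
    set γ : Matrix.SpecialLinearGroup (Fin 2) ℤ := ModularGroup.S * ModularGroup.T ^ n * g with hγ
    have hmem : γ ∈ CongruenceSubgroup.Gamma0 p := by
      rw [CongruenceSubgroup.Gamma0_mem]
      have hentry : (γ : Matrix (Fin 2) (Fin 2) ℤ) 1 0 = (g 0 0 : ℤ) + n * (g 1 0 : ℤ) := by
        simp only [hγ, Matrix.SpecialLinearGroup.coe_mul, ModularGroup.coe_S,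
          ModularGroup.coe_T_zpow]
        simp [Matrix.mul_apply, Fin.sum_univ_succ]
      simpa [hentry] using hkey
    refine ⟨(w : ℂ) + n, ?_, ⟨n, ?_, ?_⟩, γ, hmem, Or.inr ?_⟩
    · simpa using w.2
    · simpa using one_le_abs_of_fd hg
    · simpa using hg.2
    · have h1 : moebius γ τ₀ = ((γ • z : UpperHalfPlane) : ℂ) := moebius_eq γ z
      have h2 : γ • z = ModularGroup.S • (ModularGroup.T ^ n • w) := by
        rw [hγ, mul_smul, mul_smul, hwdef]
      have h3 : ((ModularGroup.T ^ n • w : UpperHalfPlane) : ℂ) = (w : ℂ) + n :=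
        ModularGroup.coe_T_zpow_smul_eq w
      have h4 : ((ModularGroup.S • (ModularGroup.T ^ n • w) : UpperHalfPlane) : ℂ) =
          (-(((ModularGroup.T ^ n • w : UpperHalfPlane)) : ℂ))⁻¹ := by
        rw [UpperHalfPlane.modular_S_smul]
      rw [h1, h2, h4, h3]
      rw [neg_div, one_div, inv_neg]
end

section
/- Let p be a prime number, V a 2-dimensional vector space over the field 𝔽_p = ℤ/pℤ, and v a basis of V (indexed by {1,2}). Let g be a linear automorphism of V which is semisimple (i.e. its minimal polynomial is squarefree) and which is not a scalar multiple of the identity. Then the quadratic form Q : V → 𝔽_p defined by Q(x) = det_v(x, g·x) — the determinant, computed with respect to the basis v, of the pair of vectors (x, g·x) — is surjective onto 𝔽_p. -/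
open Polynomial

lemma key_quad_two : ∀ cc e bb t : ZMod 2, e ^ 2 + 4 * bb * cc ≠ 0 →
    ∃ x y : ZMod 2, cc * x ^ 2 + e * x * y - bb * y ^ 2 = t := by decide

lemma key_quad (p : ℕ) [Fact p.Prime] (cc e bb : ZMod p)
    (hΔ : e ^ 2 + 4 * bb * cc ≠ 0) (t : ZMod p) :
    ∃ x y : ZMod p, cc * x ^ 2 + e * x * y - bb * y ^ 2 = t := by
  by_cases hp2 : p = 2
  · subst hp2; exact key_quad_two cc e bb t hΔ
  · have hodd : Fintype.card (ZMod p) % 2 = 1 := by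
      rw [ZMod.card]
      exact Nat.odd_iff.mp ((Fact.out : p.Prime).odd_of_ne_two hp2)
    have h2 : (2 : ZMod p) ≠ 0 := by
      intro h
      have : (p : ℕ) ∣ 2 := (ZMod.natCast_eq_zero_iff 2 p).mp (by exact_mod_cast h)
      exact hp2 ((Nat.prime_dvd_prime_iff_eq Fact.out Nat.prime_two).mp this)
    by_cases hc : cc ≠ 0
    · obtain ⟨u, w, huw⟩ := FiniteField.exists_root_sum_quadratic
        (f := (X : (ZMod p)[X]) ^ 2)
        (g := C (-(e ^ 2 + 4 * bb * cc)) * X ^ 2 + C 0 * X + C (-(4 * cc * t)))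
        (degree_X_pow 2) (degree_quadratic (neg_ne_zero.mpr hΔ)) hodd
      simp only [eval_add, eval_mul, eval_pow, eval_X, eval_C, zero_mul, add_zero] at huw
      have h2c : (2 * cc) ≠ 0 := mul_ne_zero h2 hc
      set x := (u - e * w) * (2 * cc)⁻¹ with hxdef
      have hx : 2 * cc * x = u - e * w := by
        rw [hxdef, mul_comm (u - e * w) _, ← mul_assoc, mul_inv_cancel₀ h2c, one_mul]
      refine ⟨x, w, ?_⟩
      apply mul_left_cancel₀ (mul_ne_zero h2c h2c)
      linear_combination cc * huw + cc * (2 * cc * x + e * w + u) * hx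
    · push_neg at hc
      subst hc
      by_cases hb : bb ≠ 0
      · obtain ⟨u, w, huw⟩ := FiniteField.exists_root_sum_quadratic
          (f := (X : (ZMod p)[X]) ^ 2)
          (g := C (-(e ^ 2)) * X ^ 2 + C 0 * X + C (4 * bb * t))
          (degree_X_pow 2) (degree_quadratic (neg_ne_zero.mpr (by simpa using hΔ))) hodd
        simp only [eval_add, eval_mul, eval_pow, eval_X, eval_C, zero_mul, add_zero] at huw
        have h2b : (2 * bb) ≠ 0 := mul_ne_zero h2 hb
        set y := (u + e * w) * (2 * bb)⁻¹ with hydef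
        have hy : 2 * bb * y = u + e * w := by
          rw [hydef, mul_comm (u + e * w) _, ← mul_assoc, mul_inv_cancel₀ h2b, one_mul]
        refine ⟨w, y, ?_⟩
        apply mul_left_cancel₀ (mul_ne_zero h2b h2b)
        linear_combination -bb * huw - bb * (2 * bb * y - e * w + u) * hy
      · push_neg at hb
        subst hb
        have he : e ≠ 0 := by
          intro h; apply hΔ; rw [h]; ring
        exact ⟨1, t * e⁻¹, by field_simp; ring⟩

lemma zmod2_sq : ∀ x : ZMod 2, x ^ 2 = x := by decide
lemma zmod2_two : ∀ x : ZMod 2, 2 * x = 0 := by decide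

theorem stmt_9 (p : ℕ) [Fact p.Prime] (V : Type*) [AddCommGroup V] [Module (ZMod p) V]
    (b : Module.Basis (Fin 2) (ZMod p) V) (f : Module.End (ZMod p) V)
    (hbij : Function.Bijective f)
    (hss : Squarefree (minpoly (ZMod p) f))
    (hns : ∀ c : ZMod p, f ≠ c • (1 : Module.End (ZMod p) V)) :
    Function.Surjective (fun x : V =>
      Matrix.det !![b.repr x 0, b.repr (f x) 0; b.repr x 1, b.repr (f x) 1]) := by
  classical
  haveI : Nontrivial V := b.repr.toEquiv.nontrivial
  haveI : Module.Finite (ZMod p) V := Module.Finite.of_basis b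
  haveI : Module.Free (ZMod p) V := Module.Free.of_basis b
  set E := LinearMap.toMatrixAlgEquiv b with hE
  set A := E f with hAdef
  set a := A 0 0 with ha
  set bb := A 0 1 with hbb
  set cc := A 1 0 with hcc
  set d := A 1 1 with hd
  -- discriminant is nonzero
  have hΔ : (d - a) ^ 2 + 4 * bb * cc ≠ 0 := by
    intro h0
    obtain ⟨l, h1, h2⟩ : ∃ l : ZMod p, a + d = 2 * l ∧ a * d - bb * cc = l ^ 2 := by
      by_cases hp2 : p = 2
      · subst hp2
        refine ⟨a * d - bb * cc, ?_, (zmod2_sq _).symm⟩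
        have h0' : (a + d) ^ 2 = 0 := by
          linear_combination h0 + 2 * zmod2_two (a * d) - 2 * zmod2_two (bb * cc)
        have had : a + d = 0 := pow_eq_zero_iff (n := 2) (by norm_num) |>.mp h0'
        rw [had]
        exact (zmod2_two _).symm
      · have h2 : (2 : ZMod p) ≠ 0 := by
          intro h
          have : (p : ℕ) ∣ 2 := (ZMod.natCast_eq_zero_iff 2 p).mp (by exact_mod_cast h)
          exact hp2 ((Nat.prime_dvd_prime_iff_eq Fact.out Nat.prime_two).mp this)
        have h4 : (2 : ZMod p) * 2 ≠ 0 := mul_ne_zero h2 h2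
        set l := (a + d) * 2⁻¹ with hl
        have h1 : a + d = 2 * l := by
          rw [hl, mul_comm (a + d) _, ← mul_assoc, mul_inv_cancel₀ h2, one_mul]
        refine ⟨l, h1, ?_⟩
        apply mul_left_cancel₀ h4
        linear_combination (a + d + 2 * l) * h1 - h0
    have hmat : (A - l • 1) ^ 2 = 0 := by
      ext i j
      fin_cases i <;> fin_cases j <;>
        simp [pow_two, Matrix.mul_apply, Fin.sum_univ_two, Matrix.sub_apply, Matrix.smul_apply,
          Matrix.one_apply]
      · linear_combination a * h1 - h2
      · linear_combination bb * h1
      · linear_combination cc * h1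
      · linear_combination d * h1 - h2
    have hend : (f - l • 1) ^ 2 = 0 := by
      apply E.injective
      rw [map_pow, map_sub, map_smul, map_one, map_zero]
      exact hmat
    have hann : Polynomial.aeval f ((X - C l) ^ 2) = 0 := by
      rw [map_pow, map_sub, aeval_X, aeval_C, Module.algebraMap_end_eq_smul_id]
      exact hend
    have hdvd : minpoly (ZMod p) f ∣ (X - C l) ^ 2 := minpoly.dvd _ _ hann
    have hprime : Prime ((X : (ZMod p)[X]) - C l) := prime_X_sub_C l
    obtain ⟨i, hi, hassoc⟩ := (dvd_prime_pow hprime 2).mp hdvd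
    interval_cases i
    · exact minpoly.not_isUnit (ZMod p) f (associated_one_iff_isUnit.mp (by simpa using hassoc))
    · have hmono : minpoly (ZMod p) f = X - C l :=
        Polynomial.eq_of_monic_of_associated (minpoly.monic (LinearMap.isIntegral f))
          (monic_X_sub_C l) (by simpa using hassoc)
      have : Polynomial.aeval f (minpoly (ZMod p) f) = 0 := minpoly.aeval _ _
      rw [hmono, map_sub, aeval_X, aeval_C, Module.algebraMap_end_eq_smul_id, sub_eq_zero] at this
      exact hns l this
    · have : ((X : (ZMod p)[X]) - C l) * ((X : (ZMod p)[X]) - C l) ∣ minpoly (ZMod p) f := by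
        have := hassoc.symm.dvd
        rwa [pow_two] at this
      exact hprime.not_unit (hss _ this)
  -- surjectivity
  intro t
  obtain ⟨x, y, hxy⟩ := key_quad p cc (d - a) bb hΔ t
  refine ⟨x • b 0 + y • b 1, ?_⟩
  have hfb : ∀ i j, b.repr (f (b j)) i = A i j := fun i j =>
    (LinearMap.toMatrixAlgEquiv_apply b f i j).symm
  have hr0 : b.repr (x • b 0 + y • b 1) 0 = x := by
    simp [Module.Basis.repr_self, Finsupp.single_apply]
  have hr1 : b.repr (x • b 0 + y • b 1) 1 = y := by
    simp [Module.Basis.repr_self, Finsupp.single_apply]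
  have hf : f (x • b 0 + y • b 1) = x • f (b 0) + y • f (b 1) := by
    simp [map_add, map_smul]
  have hs0 : b.repr (f (x • b 0 + y • b 1)) 0 = x * a + y * bb := by
    rw [hf]; simp [hfb 0 0, hfb 0 1, ha, hbb]
  have hs1 : b.repr (f (x • b 0 + y • b 1)) 1 = x * cc + y * d := by
    rw [hf]; simp [hfb 1 0, hfb 1 1, hcc, hd]
  simp only [Matrix.det_fin_two_of, hr0, hr1, hs0, hs1]
  linear_combination hxy
end
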